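/- Let G be a countably infinite amenable group. Then there exists an affine isometric action of G on a Hilbert space with no fixed point. Concretely, if (F_n) is a Følner sequence for G and h = (1_{F_n}/√|F_n|)_{n∈ℕ} (an element of the product ∏_n ℓ²(G) not lying in the ℓ²-direct sum H = ℓ²(ℕ×G)), then h − h·g ∈ H for all g ∈ G, and the action f ↦ f·g + h − h·g on H is a fixed-point-free affine action. -/

import Mathlib

open scoped symmDiff

open Filter

namespace AmenableNoFixedAux

noncomputable section

abbrev Hsp := lp (fun _ : ℕ × ℕ => ℝ) 2

lemma mem2_iff (f : ℕ × ℕ → ℝ) : Memℓp f 2 ↔ Summable fun i => ‖f i‖ ^ (2:ℝ) := by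
  rw [memℓp_gen_iff (by norm_num)]
  norm_num

lemma norm2 (f : Hsp) : ‖f‖ = (∑' i, ‖f i‖ ^ (2:ℝ)) ^ (1/(2:ℝ)) := by
  rw [lp.norm_eq_tsum_rpow (by norm_num)]
  norm_num

lemma norm_congr (σ : (ℕ×ℕ) ≃ (ℕ×ℕ)) (a b : Hsp) (h : ∀ p, a p = b (σ p)) :
    ‖a‖ = ‖b‖ := by
  rw [norm2, norm2]
  congr 1
  calc ∑' p, ‖a p‖ ^ (2:ℝ) = ∑' p, ‖b (σ p)‖ ^ (2:ℝ) := by simp_rw [h]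
    _ = ∑' p, ‖b p‖ ^ (2:ℝ) := σ.tsum_eq (fun q => ‖b q‖ ^ (2:ℝ))

lemma sq_norm (t : ℝ) : ‖t‖ ^ (2:ℝ) = t^2 := by
  rw [Real.norm_eq_abs, show (2:ℝ) = ((2:ℕ):ℝ) by norm_num, Real.rpow_natCast, sq_abs]

end

end AmenableNoFixedAux

open AmenableNoFixedAux in
/-- A countably infinite amenable group (given by a Følner sequence) admits an
affine isometric action on a real Hilbert space with no fixed point. -/
theorem amenable_affine_action_no_fixed_point {G : Type*} [Group G] [Countable G]
    [Infinite G] [DecidableEq G]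
    (hFol : ∃ F : ℕ → Finset G, (∀ n, (F n).Nonempty) ∧ ∀ g : G,
      Filter.Tendsto
        (fun n => (((((F n).image fun x => x * g)) ∆ (F n)).card : ℝ) / (F n).card)
        Filter.atTop (nhds 0)) :
    ∃ (H : Type) (_ : NormedAddCommGroup H) (_ : InnerProductSpace ℝ H)
      (_ : CompleteSpace H) (ρ : G → H → H),
      (∀ g : G, Isometry (ρ g)) ∧
      (∀ x : H, ρ 1 x = x) ∧
      (∀ g h : G, ∀ x : H, ρ (g * h) x = ρ h (ρ g x)) ∧
      (∀ (g : G) (x y : H) (t : ℝ), ρ g (t • x + (1 - t) • y) = t • ρ g x + (1 - t) • ρ g y) ∧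
      ¬ ∃ x : H, ∀ g : G, ρ g x = x := by
  classical
  obtain ⟨F, hne, hfol⟩ := hFol
  obtain ⟨E⟩ : Nonempty (G ≃ ℕ) := nonempty_equiv_of_countable
  set r : G → ℕ → ℝ :=
    fun g n => ((((F n).image fun x => x * g) ∆ F n).card : ℝ) / (F n).card with hrdef
  have hfol' : ∀ g : G, Tendsto (r g) atTop (nhds 0) := hfol
  have hr0 : ∀ g n, 0 ≤ r g n := fun g n => div_nonneg (Nat.cast_nonneg _) (Nat.cast_nonneg _)
  -- choose a sparse subsequence along which Følner ratios are summable
  have hEx : ∀ k : ℕ, ∃ m, ∀ i ≤ k, r (E.symm i) m ≤ (1/2:ℝ)^k := by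
    intro k
    have h1 : ∀ᶠ m in atTop, ∀ i ∈ Finset.range (k+1), r (E.symm i) m ≤ (1/2:ℝ)^k :=
      (Filter.eventually_all_finset _).mpr fun i _ =>
        ((hfol' (E.symm i)).eventually_lt_const (by positivity)).mono fun m hm => le_of_lt hm
    obtain ⟨m, hm⟩ := h1.exists
    exact ⟨m, fun i hi => hm i (Finset.mem_range_succ_iff.mpr hi)⟩
  choose N hN using hEx
  have hsum : ∀ g : G, Summable fun n => r g (N n) := by
    intro g
    rw [← summable_nat_add_iff (E g)]
    have hgeom : Summable fun n : ℕ => (1/2:ℝ) ^ (n + E g) := by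
      simp_rw [pow_add]
      exact summable_geometric_two.mul_right _
    refine Summable.of_nonneg_of_le (fun n => hr0 _ _) (fun n => ?_) hgeom
    have h2 := hN (n + E g) (E g) (Nat.le_add_left _ _)
    rwa [Equiv.symm_apply_apply] at h2
  set FF : ℕ → Finset G := fun n => F (N n) with hFFdef
  have hcpos : ∀ n, (0:ℝ) < ((FF n).card : ℝ) := fun n => by
    exact_mod_cast Finset.card_pos.mpr (hne (N n))
  set h0v : ℕ → G → ℝ :=
    fun n x => if x ∈ FF n then 1 / Real.sqrt ((FF n).card : ℝ) else 0 with h0vdef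
  set τ : G → (ℕ × ℕ) ≃ (ℕ × ℕ) := fun g =>
    (Equiv.refl ℕ).prodCongr (E.symm.trans ((Equiv.mulRight g⁻¹).trans E)) with hτdef
  have hτ : ∀ g (p : ℕ × ℕ), τ g p = (p.1, E (E.symm p.2 * g⁻¹)) := fun g p => rfl
  set h0 : ℕ × ℕ → ℝ := fun p => h0v p.1 (E.symm p.2) with h0def
  set v : G → (ℕ × ℕ) → ℝ := fun g p => h0 (τ g p) - h0 p with hvdef
  -- pointwise computation of the square of cocycle entries
  have hpt : ∀ (g : G) (n : ℕ) (x : G), ‖h0v n (x * g⁻¹) - h0v n x‖ ^ (2:ℝ) =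
      if x ∈ ((FF n).image fun y => y * g) ∆ FF n then 1 / ((FF n).card : ℝ) else 0 := by
    intro g n x
    have hmem : x * g⁻¹ ∈ FF n ↔ x ∈ (FF n).image fun y => y * g := by
      rw [Finset.mem_image]
      constructor
      · intro h; exact ⟨x * g⁻¹, h, by group⟩
      · rintro ⟨y, hy, rfl⟩; simpa using hy
    have hs : Real.sqrt ((FF n).card : ℝ) ^ 2 = ((FF n).card : ℝ) :=
      Real.sq_sqrt (le_of_lt (hcpos n))
    rw [sq_norm]
    simp only [h0vdef]
    by_cases h1 : x * g⁻¹ ∈ FF n <;> by_cases h2 : x ∈ FF n <;>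
      simp [h1, h2, hmem.mp, hmem.mpr, Finset.mem_symmDiff, ← hmem, div_pow, hs,
        sub_self, sub_zero, zero_sub, neg_sq, inv_pow, one_div]
  -- row sums of the cocycle
  have hvsum : ∀ (g : G) (n : ℕ), (Summable fun k : ℕ => ‖v g (n, k)‖ ^ (2:ℝ)) ∧
      ∑' k : ℕ, ‖v g (n, k)‖ ^ (2:ℝ) = r g (N n) := by
    intro g n
    have hfun : (fun k : ℕ => ‖v g (n,k)‖ ^ (2:ℝ)) =
        (fun x : G => ‖h0v n (x * g⁻¹) - h0v n x‖ ^ (2:ℝ)) ∘ E.symm := by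
      funext k
      simp only [hvdef, h0def, hτ, Function.comp_apply, Equiv.symm_apply_apply]
    have hptD : ∀ x ∉ ((FF n).image fun y => y * g) ∆ FF n,
        ‖h0v n (x*g⁻¹) - h0v n x‖ ^ (2:ℝ) = 0 := fun x hx => by rw [hpt g n x, if_neg hx]
    have hsumG : Summable (fun x : G => ‖h0v n (x * g⁻¹) - h0v n x‖ ^ (2:ℝ)) :=
      summable_of_ne_finset_zero hptD
    refine ⟨by rw [hfun]; exact (Equiv.summable_iff E.symm).mpr hsumG, ?_⟩
    rw [hfun]
    calc (∑' k : ℕ, ((fun x : G => ‖h0v n (x * g⁻¹) - h0v n x‖ ^ (2:ℝ)) ∘ E.symm) k)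
        = ∑' x : G, ‖h0v n (x * g⁻¹) - h0v n x‖ ^ (2:ℝ) :=
          E.symm.tsum_eq (fun x : G => ‖h0v n (x * g⁻¹) - h0v n x‖ ^ (2:ℝ))
      _ = ∑ x ∈ ((FF n).image fun y => y * g) ∆ FF n,
            ‖h0v n (x * g⁻¹) - h0v n x‖ ^ (2:ℝ) := tsum_eq_sum hptD
      _ = ∑ _x ∈ ((FF n).image fun y => y * g) ∆ FF n, 1 / ((FF n).card : ℝ) := by
            apply Finset.sum_congr rfl
            intro x hx
            rw [hpt g n x, if_pos hx]
      _ = r g (N n) := by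
            rw [Finset.sum_const, nsmul_eq_mul, hrdef]
            field_simp
            exact mul_comm _ _
  -- unit norm of each row of h0
  have hh0 : ∀ n : ℕ, ∑' k : ℕ, ‖h0 (n,k)‖ ^ (2:ℝ) = 1 := by
    intro n
    have hpt2 : ∀ x : G, ‖h0v n x‖ ^ (2:ℝ) = if x ∈ FF n then 1 / ((FF n).card : ℝ) else 0 := by
      intro x
      have hs : Real.sqrt ((FF n).card : ℝ) ^ 2 = ((FF n).card : ℝ) :=
        Real.sq_sqrt (le_of_lt (hcpos n))
      rw [sq_norm]
      simp only [h0vdef]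
      by_cases h2 : x ∈ FF n <;> simp [h2, div_pow, hs]
    have hfun : (fun k : ℕ => ‖h0 (n,k)‖ ^ (2:ℝ)) =
        (fun x : G => ‖h0v n x‖ ^ (2:ℝ)) ∘ E.symm := rfl
    rw [hfun]
    calc (∑' k : ℕ, ((fun x : G => ‖h0v n x‖ ^ (2:ℝ)) ∘ E.symm) k)
        = ∑' x : G, ‖h0v n x‖ ^ (2:ℝ) :=
          E.symm.tsum_eq (fun x : G => ‖h0v n x‖ ^ (2:ℝ))
      _ = ∑ x ∈ FF n, ‖h0v n x‖ ^ (2:ℝ) :=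
          tsum_eq_sum (fun x hx => by rw [hpt2 x, if_neg hx])
      _ = ∑ _x ∈ FF n, 1 / ((FF n).card : ℝ) :=
          Finset.sum_congr rfl fun x hx => by rw [hpt2 x, if_pos hx]
      _ = 1 := by
          rw [Finset.sum_const, nsmul_eq_mul]
          field_simp
  -- membership of the cocycle in ℓ²
  have hvmem : ∀ g : G, Memℓp (v g) 2 := by
    intro g
    rw [mem2_iff]
    refine (summable_prod_of_nonneg ?_).mpr ⟨fun n => (hvsum g n).1, ?_⟩
    · intro p; exact Real.rpow_nonneg (norm_nonneg _) _
    · have heq : (fun n => ∑' k : ℕ, ‖v g (n,k)‖ ^ (2:ℝ)) = fun n => r g (N n) :=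
        funext fun n => (hvsum g n).2
      rw [heq]; exact hsum g
  have htr : ∀ (g : G) (f : Hsp), Memℓp (fun p => f (τ g p)) 2 := by
    intro g f
    rw [mem2_iff]
    have h2 := (mem2_iff ⇑f).mp (lp.memℓp f)
    exact ((τ g).summable_iff (f := fun i => ‖f i‖ ^ (2:ℝ))).mpr h2
  -- the affine action
  set ρ : G → Hsp → Hsp := fun g f => ⟨fun p => f (τ g p) + v g p, (htr g f).add (hvmem g)⟩
    with hρdef
  have hρ : ∀ (g : G) (f : Hsp) (p : ℕ × ℕ), (ρ g f : ℕ × ℕ → ℝ) p = f (τ g p) + v g p :=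
    fun _ _ _ => rfl
  have hτ1 : ∀ p : ℕ × ℕ, τ (1:G) p = p := by
    intro p; rw [hτ]; simp
  have hτc : ∀ (g h : G) (p : ℕ × ℕ), τ g (τ h p) = τ (g*h) p := by
    intro g h p; rw [hτ, hτ, hτ]; simp [mul_inv_rev, mul_assoc]
  refine ⟨Hsp, inferInstance, inferInstance, inferInstance, ρ, ?_, ?_, ?_, ?_, ?_⟩
  · -- isometry
    intro g
    apply Isometry.of_dist_eq
    intro x y
    rw [dist_eq_norm, dist_eq_norm]
    apply norm_congr (τ g)
    intro p
    have h1 : (x - y : Hsp) (τ g p) = x (τ g p) - y (τ g p) := by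
      rw [lp.coeFn_sub]; rfl
    have h2 : (ρ g x - ρ g y : Hsp) p = (ρ g x) p - (ρ g y) p := by
      rw [lp.coeFn_sub]; rfl
    rw [h2, h1, hρ, hρ]; ring
  · -- identity
    intro x
    apply lp.ext
    funext p
    rw [hρ, hvdef]
    simp only [hτ1]
    ring
  · -- action law
    intro g h x
    apply lp.ext
    funext p
    rw [hρ, hρ, hρ, hvdef]
    simp only [hτc]
    ring
  · -- affine
    intro g x y t
    apply lp.ext
    funext p
    have hL : (t • x + (1-t) • y : Hsp) (τ g p) = t * x (τ g p) + (1-t) * y (τ g p) := by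
      rw [lp.coeFn_add, lp.coeFn_smul, lp.coeFn_smul]; rfl
    have hR : (t • ρ g x + (1-t) • ρ g y : Hsp) p = t * (ρ g x) p + (1-t) * (ρ g y) p := by
      rw [lp.coeFn_add, lp.coeFn_smul, lp.coeFn_smul]; rfl
    rw [hρ, hR, hρ, hρ, hL]; ring
  · -- no fixed point
    rintro ⟨x, hx⟩
    have hxp : ∀ (g : G) (p : ℕ × ℕ), x (τ g p) + v g p = x p := by
      intro g p
      have h2 := congrArg (fun f : Hsp => (f : ℕ × ℕ → ℝ) p) (hx g)
      simpa [hρ] using h2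
    set w : ℕ × ℕ → ℝ := fun p => x p + h0 p with hwdef
    have hwinv : ∀ (g : G) (p : ℕ × ℕ), w (τ g p) = w p := by
      intro g p
      have h1 := hxp g p
      simp only [hvdef] at h1
      simp only [hwdef]
      linarith
    have hconst : ∀ n k, w (n, k) = w (n, 0) := by
      intro n k
      have h1 := hwinv ((E.symm 0)⁻¹ * E.symm k) (n, k)
      rw [hτ] at h1
      simp only [mul_inv_rev, inv_inv] at h1
      rw [show (E.symm (n,k).2 * ((E.symm k)⁻¹ * E.symm 0)) = E.symm 0 by
        simp [← mul_assoc]] at h1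
      simpa using h1.symm
    have hxs : Summable fun p : ℕ × ℕ => ‖x p‖ ^ (2:ℝ) := (mem2_iff _).mp (lp.memℓp x)
    obtain ⟨hinner, houter⟩ :=
      (summable_prod_of_nonneg (fun p => Real.rpow_nonneg (norm_nonneg _) _)).mp hxs
    have hc0 : ∀ n, w (n, 0) = 0 := by
      intro n
      have hfin : ∀ᶠ k in atTop, k ∉ (FF n).image E := by
        have h2 := ((FF n).image E).finite_toSet.eventually_cofinite_notMem
        rw [Nat.cofinite_eq_atTop] at h2
        exact h2.mono fun k hk => by rw [← Finset.mem_coe]; exact hk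
      have hev : ∀ᶠ k in atTop, ‖x (n,k)‖ ^ (2:ℝ) = ‖w (n,0)‖ ^ (2:ℝ) := by
        filter_upwards [hfin] with k hk
        have h0z : h0 (n,k) = 0 := by
          have hnm : E.symm k ∉ FF n := by
            intro hmem
            have h7 := Finset.mem_image_of_mem E hmem
            rw [Equiv.apply_symm_apply] at h7
            exact hk h7
          simp only [h0def, h0vdef]
          exact if_neg hnm
        have hxk : x (n,k) = w (n,0) := by
          have h3 := hconst n k
          simp only [hwdef] at h3 ⊢
          linarith
        rw [hxk]
      have ht1 : Tendsto (fun k => ‖x (n,k)‖ ^ (2:ℝ)) atTop (nhds 0) :=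
        (hinner n).tendsto_atTop_zero
      have ht2 : Tendsto (fun _ : ℕ => ‖w (n,0)‖ ^ (2:ℝ)) atTop (nhds 0) :=
        ht1.congr' hev
      have h4 : ‖w (n,0)‖ ^ (2:ℝ) = 0 := tendsto_nhds_unique tendsto_const_nhds ht2
      rw [sq_norm] at h4
      exact pow_eq_zero_iff (by norm_num) |>.mp h4
    have hrow : ∀ n, ∑' k : ℕ, ‖x (n,k)‖ ^ (2:ℝ) = 1 := by
      intro n
      have hxk : ∀ k, x (n,k) = - h0 (n,k) := by
        intro k
        have h3 := hconst n k
        have h5 := hc0 n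
        simp only [hwdef] at h3 h5
        linarith
      calc ∑' k : ℕ, ‖x (n,k)‖ ^ (2:ℝ) = ∑' k : ℕ, ‖h0 (n,k)‖ ^ (2:ℝ) := by
            simp_rw [hxk, norm_neg]
        _ = 1 := hh0 n
    have hone : Summable fun _ : ℕ => (1:ℝ) := by
      have h6 : (fun n => ∑' k : ℕ, ‖x (n,k)‖ ^ (2:ℝ)) = fun _ => (1:ℝ) := funext hrow
      rwa [h6] at houter
    rw [summable_const_iff] at hone
    exact one_ne_zero hone
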